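/- Let p be a prime, n ≥ 2, and f ∈ ℤ[x]. The function [f]_{p^n} induced by f on ℤ/p^nℤ is a permutation of ℤ/p^nℤ if and only if [f]_p is a permutation of ℤ/pℤ and the formal derivative f′ has no root mod p, i.e. [f′]_p(x) ≠ 0 for all x ∈ ℤ/pℤ. -/

import Mathlib

open Polynomial

private lemma aeval_intCast_zmod (m : ℕ) (f : Polynomial ℤ) (z : ℤ) :
    Polynomial.aeval ((z : ZMod m)) f = ((f.eval z : ℤ) : ZMod m) := by
  have : ((z : ZMod m)) = algebraMap ℤ (ZMod m) z := by simp
  rw [this, Polynomial.aeval_algebraMap_apply_eq_algebraMap_eval]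
  simp

/-- Injectivity on `ZMod m` in terms of integer divisibility. -/
private lemma inj_iff_int (m : ℕ) (f : Polynomial ℤ) :
    Function.Injective (fun x : ZMod m => Polynomial.aeval x f) ↔
      ∀ a b : ℤ, (m : ℤ) ∣ f.eval a - f.eval b → (m : ℤ) ∣ a - b := by
  constructor
  · intro h a b hd
    have : Polynomial.aeval ((a : ZMod m)) f = Polynomial.aeval ((b : ZMod m)) f := by
      rw [aeval_intCast_zmod, aeval_intCast_zmod]
      rw [ZMod.intCast_eq_intCast_iff, Int.modEq_iff_dvd]
      exact (dvd_sub_comm).mp hd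
    have := h this
    rwa [ZMod.intCast_eq_intCast_iff, Int.modEq_iff_dvd, dvd_sub_comm] at this
  · intro h x y hxy
    obtain ⟨a, rfl⟩ := ZMod.intCast_surjective x
    obtain ⟨b, rfl⟩ := ZMod.intCast_surjective y
    simp only [aeval_intCast_zmod, ZMod.intCast_eq_intCast_iff, Int.modEq_iff_dvd] at hxy ⊢
    exact h b a hxy

/-- For `n ≥ 2`, a polynomial `f ∈ ℤ[x]` induces a permutation of `ℤ/p^nℤ`
if and only if it induces a permutation of `ℤ/pℤ` and its formal derivative
has no root mod `p`. -/
theorem bijective_mod_pn_iff (p : ℕ) (hp : p.Prime) (n : ℕ) (hn : 2 ≤ n)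
    (f : Polynomial ℤ) :
    Function.Bijective (fun x : ZMod (p ^ n) => Polynomial.aeval x f) ↔
      (Function.Bijective (fun x : ZMod p => Polynomial.aeval x f) ∧
       ∀ x : ZMod p, Polynomial.aeval x (Polynomial.derivative f) ≠ 0) := by
  haveI : NeZero p := ⟨hp.ne_zero⟩
  haveI : NeZero (p ^ n) := ⟨pow_ne_zero _ hp.ne_zero⟩
  have hp1 : 1 < p := hp.one_lt
  have hpz : Prime (p : ℤ) := Nat.prime_iff_prime_int.mp hp
  constructor
  · rintro ⟨hinj, hsurj⟩
    have hinjZ : ∀ a b : ℤ, ((p : ℤ) ^ n) ∣ f.eval a - f.eval b → ((p : ℤ) ^ n) ∣ a - b := by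
      have := (inj_iff_int (p ^ n) f).mp hinj
      intro a b h
      have := this a b (by push_cast; exact h)
      push_cast at this; exact this
    constructor
    · rw [← Finite.surjective_iff_bijective]
      intro y
      obtain ⟨z, rfl⟩ := ZMod.intCast_surjective y
      obtain ⟨x, hx⟩ := hsurj ((z : ZMod (p ^ n)))
      obtain ⟨w, rfl⟩ := ZMod.intCast_surjective x
      simp only [aeval_intCast_zmod, ZMod.intCast_eq_intCast_iff, Int.modEq_iff_dvd] at hx
      refine ⟨(w : ZMod p), ?_⟩
      show Polynomial.aeval ((w : ZMod p)) f = ((z : ℤ) : ZMod p)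
      rw [aeval_intCast_zmod, ZMod.intCast_eq_intCast_iff, Int.modEq_iff_dvd]
      refine dvd_trans ?_ hx
      have : (p : ℤ) ∣ (p : ℤ) ^ n := dvd_pow_self _ (by omega)
      push_cast
      exact this
    · intro x hx
      obtain ⟨z, rfl⟩ := ZMod.intCast_surjective x
      rw [aeval_intCast_zmod, ZMod.intCast_zmod_eq_zero_iff_dvd] at hx
      obtain ⟨c, hc⟩ := hx
      obtain ⟨k, hk⟩ := f.binomExpansion z ((p : ℤ) ^ (n - 1))
      have hdvd : ((p : ℤ) ^ n) ∣ f.eval (z + (p : ℤ) ^ (n - 1)) - f.eval z := by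
        rw [hk]
        have h1 : ((p : ℤ) ^ n) ∣ (Polynomial.derivative f).eval z * (p : ℤ) ^ (n - 1) := by
          rw [hc]
          have hpn : (p : ℤ) ^ n = (p : ℤ) * (p : ℤ) ^ (n - 1) := by
            rw [← pow_succ']
            congr 1
            omega
          rw [hpn]
          exact ⟨c, by ring⟩
        have h2 : ((p : ℤ) ^ n) ∣ k * ((p : ℤ) ^ (n - 1)) ^ 2 := by
          refine Dvd.dvd.mul_left ?_ k
          rw [← pow_mul]
          exact pow_dvd_pow _ (by omega)
        have := dvd_add h1 h2
        convert this using 1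
        all_goals first | rfl | ring
      have := hinjZ _ _ hdvd
      simp only [add_sub_cancel_left] at this
      have : p ^ n ∣ p ^ (n - 1) := by exact_mod_cast this
      rw [Nat.pow_dvd_pow_iff_le_right hp1] at this
      omega
  · rintro ⟨⟨hinjp, _⟩, hder⟩
    have hderZ : ∀ b : ℤ, ¬ (p : ℤ) ∣ (Polynomial.derivative f).eval b := by
      intro b hb
      exact hder (b : ZMod p)
        (by rw [aeval_intCast_zmod, ZMod.intCast_zmod_eq_zero_iff_dvd]; exact hb)
    have hinjZ : ∀ a b : ℤ, (p : ℤ) ∣ f.eval a - f.eval b → (p : ℤ) ∣ a - b := by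
      have := (inj_iff_int p f).mp hinjp
      intro a b h
      exact this a b h
    have key : ∀ k, 1 ≤ k → ∀ a b : ℤ,
        ((p : ℤ) ^ k) ∣ f.eval a - f.eval b → ((p : ℤ) ^ k) ∣ a - b := by
      intro k
      induction k with
      | zero => omega
      | succ k ih =>
        intro _ a b hd
        rcases Nat.eq_zero_or_pos k with rfl | hk
        · simpa using hinjZ a b (by simpa using hd)
        · have h1 : (p : ℤ) ^ k ∣ a - b :=
            ih hk a b (dvd_trans (pow_dvd_pow _ (Nat.le_succ k)) hd)
          obtain ⟨t, ht⟩ := h1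
          obtain ⟨c, hc⟩ := f.binomExpansion b ((p : ℤ) ^ k * t)
          have ha : a = b + (p : ℤ) ^ k * t := by linarith
          rw [ha, hc] at hd
          have h2 : ((p : ℤ) ^ (k + 1)) ∣ c * ((p : ℤ) ^ k * t) ^ 2 := by
            have hdd : ((p : ℤ) ^ (k + 1)) ∣ ((p : ℤ) ^ k) ^ 2 := by
              rw [← pow_mul]
              exact pow_dvd_pow _ (by omega)
            exact hdd.trans ⟨c * t ^ 2, by ring⟩
          have h3 : ((p : ℤ) ^ (k + 1)) ∣
              (p : ℤ) ^ k * ((Polynomial.derivative f).eval b * t) := by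
            have := dvd_sub hd h2
            convert this using 1
            all_goals first | rfl | ring
          have h4 : (p : ℤ) ∣ (Polynomial.derivative f).eval b * t := by
            have hne : ((p : ℤ) ^ k) ≠ 0 := pow_ne_zero _ (by exact_mod_cast hp.ne_zero)
            rw [pow_succ, mul_comm ((p:ℤ)^k) ((p:ℤ))] at h3
            rcases h3 with ⟨d, hdq⟩
            refine ⟨d, ?_⟩
            apply mul_left_cancel₀ hne
            rw [hdq]; ring
          have h5 : (p : ℤ) ∣ t := by
            rcases hpz.dvd_mul.mp h4 with h | h
            · exact absurd h (hderZ b)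
            · exact h
          obtain ⟨s, hs⟩ := h5
          refine ⟨s, ?_⟩
          rw [ha, hs, pow_succ]
          ring
    rw [← Finite.injective_iff_bijective, inj_iff_int]
    intro a b h
    have := key n (by omega) a b (by push_cast at h ⊢; exact h)
    push_cast
    exact this
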